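/- If a graph G admits an interval edge-coloring (a proper edge-coloring with consecutive integers such that the colors on edges incident to each vertex form an interval of integers), then the chromatic index of G equals its maximum degree Δ(G). -/

import Mathlib

open SimpleGraph

/-- A proper edge-coloring: edges sharing a vertex get distinct colors. -/
def EProper {V : Type*} (G : SimpleGraph V) (c : Sym2 V → ℕ) : Prop :=
  ∀ v a b, G.Adj v a → G.Adj v b → a ≠ b → c s(v, a) ≠ c s(v, b)

/-- The spectrum of a vertex: set of colors on incident edges. -/
def specS {V : Type*} (G : SimpleGraph V) (c : Sym2 V → ℕ) (v : V) : Set ℕ :=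
  {k | ∃ u, G.Adj v u ∧ c s(v, u) = k}

/-- An interval t-coloring: proper, uses exactly the colors 1..t, and each
vertex's spectrum is an interval of integers. -/
def IsIntCol {V : Type*} (G : SimpleGraph V) (c : Sym2 V → ℕ) (t : ℕ) : Prop :=
  EProper G c ∧
  (∀ e ∈ G.edgeSet, 1 ≤ c e ∧ c e ≤ t) ∧
  (∀ k, 1 ≤ k → k ≤ t → ∃ e ∈ G.edgeSet, c e = k) ∧
  (∀ v, ∀ a ∈ specS G c v, ∀ b ∈ specS G c v,
     ∀ k, a ≤ k → k ≤ b → k ∈ specS G c v)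

/-- Interval colorability. -/
def IntColorable {V : Type*} (G : SimpleGraph V) : Prop :=
  ∃ t c, IsIntCol G c t

/-- Least t admitting an interval t-coloring. -/
noncomputable def wInt {V : Type*} (G : SimpleGraph V) : ℕ :=
  sInf {t | ∃ c, IsIntCol G c t}

/-- Greatest t admitting an interval t-coloring. -/
noncomputable def WInt {V : Type*} (G : SimpleGraph V) : ℕ :=
  sSup {t | ∃ c, IsIntCol G c t}

/-- The set of values `max S(v,c)` over vertices v. -/
def maxSpecSet {V : Type*} (G : SimpleGraph V) (c : Sym2 V → ℕ) : Set ℕ :=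
  {m | ∃ v, sSup (specS G c v) = m}

/-- The sorted sequence of largest incident colors is continuous: every integer
between its minimum and maximum is attained. -/
def MaxSpecContinuous {V : Type*} (G : SimpleGraph V) (c : Sym2 V → ℕ) : Prop :=
  ∀ k, sInf (maxSpecSet G c) ≤ k → k ≤ sSup (maxSpecSet G c) → k ∈ maxSpecSet G c

/-- The composition (lexicographic product) G[H]. -/
def lexComp {V W : Type*} (G : SimpleGraph V) (H : SimpleGraph W) :
    SimpleGraph (V × W) where
  Adj a b := G.Adj a.1 b.1 ∨ (a.1 = b.1 ∧ H.Adj a.2 b.2)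
  symm := by
    constructor
    intro a b h
    rcases h with h | ⟨h1, h2⟩
    · exact Or.inl h.symm
    · exact Or.inr ⟨h1.symm, h2.symm⟩
  loopless := by
    constructor
    intro a h
    rcases h with h | ⟨_, h2⟩
    · exact G.ne_of_adj h rfl
    · exact H.ne_of_adj h2 rfl

/-- The chromatic index: least number of colors in a proper edge-coloring. -/
noncomputable def chromIndex {V : Type*} (G : SimpleGraph V) : ℕ :=
  sInf {k | ∃ c, EProper G c ∧ ∀ e ∈ G.edgeSet, c e < k}

lemma spec_gap {V : Type*} [Fintype V] (G : SimpleGraph V) [DecidableRel G.Adj]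
    {c : Sym2 V → ℕ} {t : ℕ} (hc : IsIntCol G c t) (v : V) {x y : ℕ}
    (hx : x ∈ specS G c v) (hy : y ∈ specS G c v) (hxy : x ≤ y) :
    y - x < G.degree v := by
  classical
  have hmem : ∀ k ∈ Finset.Icc x y, k ∈ specS G c v := fun k hk => by
    rw [Finset.mem_Icc] at hk
    exact hc.2.2.2 v x hx y hy k hk.1 hk.2
  set f : ℕ → V := fun k => if h : k ∈ specS G c v then h.choose else v with hf
  have hcard : (Finset.Icc x y).card ≤ (G.neighborFinset v).card := by
    apply Finset.card_le_card_of_injOn f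
    · intro k hk
      have h := hmem k hk
      rw [Finset.mem_coe, SimpleGraph.mem_neighborFinset]
      simp only [hf, dif_pos h]
      exact h.choose_spec.1
    · intro k1 h1 k2 h2 heq
      have m1 := hmem k1 h1
      have m2 := hmem k2 h2
      have e1 : c s(v, f k1) = k1 := by simp only [hf, dif_pos m1]; exact m1.choose_spec.2
      have e2 : c s(v, f k2) = k2 := by simp only [hf, dif_pos m2]; exact m2.choose_spec.2
      rw [← e1, ← e2, heq]
  rw [Nat.card_Icc] at hcard
  have : G.degree v = (G.neighborFinset v).card := rfl
  omega

/-- If G admits an interval coloring then χ'(G) = Δ(G). -/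
theorem stmt0 {V : Type*} [Fintype V] (G : SimpleGraph V) [DecidableRel G.Adj]
    (h : IntColorable G) : chromIndex G = G.maxDegree := by
  classical
  obtain ⟨t, c, hc⟩ := h
  apply le_antisymm
  · apply Nat.sInf_le
    refine ⟨fun e => (c e - 1) % G.maxDegree, ?_, ?_⟩
    · intro v a b hva hvb hab
      have hx := (hc.2.1 s(v,a) ((G.mem_edgeSet).2 hva)).1
      have hy := (hc.2.1 s(v,b) ((G.mem_edgeSet).2 hvb)).1
      have hne : c s(v,a) ≠ c s(v,b) := hc.1 v a b hva hvb hab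
      intro heq
      have hsa : c s(v,a) ∈ specS G c v := ⟨a, hva, rfl⟩
      have hsb : c s(v,b) ∈ specS G c v := ⟨b, hvb, rfl⟩
      have key : ∀ x y : ℕ, 1 ≤ x → x ∈ specS G c v → y ∈ specS G c v → x < y →
          (x-1) % G.maxDegree = (y-1) % G.maxDegree → False := by
        intro x y hx1 hxs hys hlt hmod
        have hgap : y - x < G.degree v := spec_gap G hc v hxs hys hlt.le
        have hlt' : y - x < G.maxDegree := lt_of_lt_of_le hgap (G.degree_le_maxDegree v)
        have hdvd : G.maxDegree ∣ (y-1) - (x-1) := (Nat.modEq_iff_dvd' (by omega)).1 hmod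
        have hyx : (y-1)-(x-1) = y - x := by omega
        rw [hyx] at hdvd
        have := Nat.le_of_dvd (by omega) hdvd
        omega
      rcases lt_or_gt_of_ne hne with hlt | hlt
      · exact key _ _ hx hsa hsb hlt heq
      · exact key _ _ hy hsb hsa hlt heq.symm
    · intro e he
      induction e using Sym2.ind with
      | _ u w =>
        have hadj : G.Adj u w := (G.mem_edgeSet).1 he
        have hΔ : 0 < G.maxDegree := by
          have : 0 < G.degree u := by
            rw [G.degree_pos_iff_exists_adj]; exact ⟨w, hadj⟩
          exact lt_of_lt_of_le this (G.degree_le_maxDegree u)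
        exact Nat.mod_lt _ hΔ
  · apply le_csInf
    · exact ⟨t+1, c, hc.1, fun e he => by have := (hc.2.1 e he).2; omega⟩
    · rintro k ⟨c', hp, hb⟩
      apply SimpleGraph.maxDegree_le_of_forall_degree_le
      intro v
      have hcard : (G.neighborFinset v).card ≤ (Finset.range k).card := by
        apply Finset.card_le_card_of_injOn (fun u => c' s(v,u))
        · intro u hu
          rw [Finset.mem_coe, Finset.mem_range]
          exact hb _ ((G.mem_edgeSet).2 ((SimpleGraph.mem_neighborFinset _ _ _).1 hu))
        · intro a ha b hb' heq
          by_contra hab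
          exact hp v a b ((SimpleGraph.mem_neighborFinset _ _ _).1 ha)
            ((SimpleGraph.mem_neighborFinset _ _ _).1 hb') hab heq
      simpa using hcard
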